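/- Define E : ℕ → ℝ by E[0] = 0 and (1 - qⁿ)·E[n] = 1 + Σ_{k=0}^{n-1} C(n,k) p^{n-k} q^k E[k] for n ≥ 1, where p ∈ (0,1) and q = 1-p. Then E[n] ≥ q·log(n+1) for all n. -/

import Mathlib

open Finset in
/-- Hub recurrence lower bound: `E n ≥ q·log(n+1)`. -/
theorem hub_lower_bound (p : ℝ) (hp0 : 0 < p) (hp1 : p < 1) (q : ℝ) (hq : q = 1 - p)
    (E : ℕ → ℝ) (hE0 : E 0 = 0)
    (hrec : ∀ n : ℕ, 1 ≤ n →
      (1 - q ^ n) * E n =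
        1 + ∑ k ∈ range n, (n.choose k : ℝ) * p ^ (n - k) * q ^ k * E k) :
    ∀ n : ℕ, q * Real.log ((n : ℝ) + 1) ≤ E n := by
  have hq0 : 0 < q := by rw [hq]; linarith
  have hq1 : q < 1 := by rw [hq]; linarith
  intro n
  induction n using Nat.strong_induction_on with
  | _ n ih =>
    rcases Nat.eq_zero_or_pos n with rfl | hn
    · simp [hE0]
    · set f : ℕ → ℝ := fun k => (n.choose k : ℝ) * p ^ (n - k) * q ^ k with hf
      have hfpos : ∀ k, 0 ≤ f k := by
        intro k; simp only [hf]; positivity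
      have hsum : ∑ k ∈ Finset.range (n + 1), f k = 1 := by
        calc ∑ k ∈ Finset.range (n + 1), f k
            = ∑ k ∈ Finset.range (n + 1), q ^ k * p ^ (n - k) * (n.choose k : ℝ) := by
              apply Finset.sum_congr rfl; intro k _; simp only [hf]; ring
          _ = (q + p) ^ n := (add_pow q p n).symm
          _ = 1 := by rw [show q + p = 1 by linarith]; simp
      have hfn : f n = q ^ n := by simp [hf]
      have hsumn : ∑ k ∈ Finset.range n, f k = 1 - q ^ n := by
        have h := Finset.sum_range_succ f n
        rw [hsum, hfn] at h
        linarith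
      -- per-term bound
      have hterm : ∀ k ∈ Finset.range n,
          f k * (q * (Real.log ((n : ℝ) + 1) - Real.log ((k : ℝ) + 1))) ≤ p * f (k + 1) := by
        intro k hk
        have hkn : k < n := Finset.mem_range.mp hk
        have hk1 : (0 : ℝ) < (k : ℝ) + 1 := by positivity
        have hlog : Real.log ((n : ℝ) + 1) - Real.log ((k : ℝ) + 1)
            ≤ ((n : ℝ) - k) / ((k : ℝ) + 1) := by
          have h1 : Real.log (((n : ℝ) + 1) / ((k : ℝ) + 1)) ≤ ((n : ℝ) + 1) / ((k : ℝ) + 1) - 1 :=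
            Real.log_le_sub_one_of_pos (by positivity)
          rw [Real.log_div (by positivity) (by positivity)] at h1
          have h2 : ((n : ℝ) + 1) / ((k : ℝ) + 1) - 1 = ((n : ℝ) - k) / ((k : ℝ) + 1) := by
            field_simp
            ring
          linarith [h2 ▸ h1]
        have hchoose : (n.choose k : ℝ) * ((n : ℝ) - (k : ℝ))
            = ((k : ℝ) + 1) * (n.choose (k + 1) : ℝ) := by
          have h := Nat.choose_succ_right_eq n k
          have hcast : ((n.choose (k + 1) : ℝ)) * ((k : ℝ) + 1)
              = (n.choose k : ℝ) * (((n - k : ℕ) : ℝ)) := by exact_mod_cast congrArg (Nat.cast (R := ℝ)) h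
          rw [Nat.cast_sub hkn.le] at hcast
          linarith
        have hpow : p ^ (n - k) = p * p ^ (n - (k + 1)) := by
          rw [← pow_succ']
          congr 1
          omega
        have heq : f k * (q * (((n : ℝ) - (k : ℝ)) / ((k : ℝ) + 1))) = p * f (k + 1) := by
          simp only [hf, hpow]
          field_simp
          linear_combination (q ^ (k + 1)) * hchoose
        calc f k * (q * (Real.log ((n : ℝ) + 1) - Real.log ((k : ℝ) + 1)))
            ≤ f k * (q * (((n : ℝ) - (k : ℝ)) / ((k : ℝ) + 1))) := by
              apply mul_le_mul_of_nonneg_left _ (hfpos k)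
              exact mul_le_mul_of_nonneg_left hlog hq0.le
          _ = p * f (k + 1) := heq
      -- sum bound
      have hshift : ∑ k ∈ Finset.range n, f (k + 1) ≤ 1 := by
        have h := Finset.sum_range_succ' f n
        rw [hsum] at h
        have := hfpos 0
        linarith
      have hkey : ∑ k ∈ Finset.range n,
          f k * (q * (Real.log ((n : ℝ) + 1) - Real.log ((k : ℝ) + 1))) ≤ 1 := by
        calc ∑ k ∈ Finset.range n,
            f k * (q * (Real.log ((n : ℝ) + 1) - Real.log ((k : ℝ) + 1)))
            ≤ ∑ k ∈ Finset.range n, p * f (k + 1) := Finset.sum_le_sum hterm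
          _ = p * ∑ k ∈ Finset.range n, f (k + 1) := by rw [Finset.mul_sum]
          _ ≤ p * 1 := by
              exact mul_le_mul_of_nonneg_left hshift hp0.le
          _ ≤ 1 := by linarith
      -- expand key sum
      have hexpand : ∑ k ∈ Finset.range n,
          f k * (q * (Real.log ((n : ℝ) + 1) - Real.log ((k : ℝ) + 1)))
          = (1 - q ^ n) * (q * Real.log ((n : ℝ) + 1))
            - ∑ k ∈ Finset.range n, f k * (q * Real.log ((k : ℝ) + 1)) := by
        rw [← hsumn, Finset.sum_mul, ← Finset.sum_sub_distrib]
        apply Finset.sum_congr rfl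
        intro k _
        ring
      have hIH : ∑ k ∈ Finset.range n, f k * (q * Real.log ((k : ℝ) + 1))
          ≤ ∑ k ∈ Finset.range n, f k * E k := by
        apply Finset.sum_le_sum
        intro k hk
        exact mul_le_mul_of_nonneg_left (ih k (Finset.mem_range.mp hk)) (hfpos k)
      have hrecn := hrec n hn
      have hqn : q ^ n < 1 := pow_lt_one₀ hq0.le hq1 (by omega)
      have h1qn : 0 < 1 - q ^ n := by linarith
      have hfinal : (1 - q ^ n) * (q * Real.log ((n : ℝ) + 1)) ≤ (1 - q ^ n) * E n := by
        rw [hrecn]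
        linarith [hexpand ▸ hkey]
      exact le_of_mul_le_mul_left hfinal h1qn
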